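/- Let X₁, …, X_n be metric spaces each satisfying property (H). Then their product X₁ × … × X_n, equipped with the ℓ¹ combination of the distances d((x₁,…,x_n),(y₁,…,y_n)) = d₁(x₁,y₁) + … + d_n(x_n,y_n), satisfies property (H). -/

import Mathlib

/-- A metric space satisfies property `(H_δ)` if there is a polynomial `P` such that
for all `r ≥ 0` and all `x, y`, the set of points `t` with `d(x,t) ≤ r` lying on a
`δ`-path from `x` to `y` is finite with at most `P(r)` elements. -/
def HasPropertyHdelta (X : Type*) [MetricSpace X] (δ : ℝ) : Prop :=
  ∃ P : Polynomial ℝ, ∀ r : ℝ, 0 ≤ r → ∀ x y : X,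
    {t : X | dist x t ≤ r ∧ dist x t + dist t y ≤ dist x y + δ}.Finite ∧
    ({t : X | dist x t ≤ r ∧ dist x t + dist t y ≤ dist x y + δ}).ncard ≤ P.eval r

/-- A metric space satisfies property `(H)` if it satisfies `(H_δ)` for every `δ ≥ 0`. -/
def HasPropertyH (X : Type*) [MetricSpace X] : Prop :=
  ∀ δ : ℝ, 0 ≤ δ → HasPropertyHdelta X δ

/-- A subset `Y` of a metric space is a uniform net if distinct points of `Y` are
uniformly separated and every point of the space is uniformly close to `Y`. -/
def IsUniformNet {H : Type*} [MetricSpace H] (Y : Set H) : Prop :=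
  ∃ r R : ℝ, 0 < r ∧ 0 < R ∧
    (∀ y ∈ Y, ∀ z ∈ Y, y ≠ z → r ≤ dist y z) ∧
    (∀ x : H, ∃ y ∈ Y, dist x y < R)

/-- A metric space has bounded geometry if uniformly separated subsets of balls of a
given radius have uniformly bounded cardinality. -/
def HasBoundedGeometry (H : Type*) [MetricSpace H] : Prop :=
  ∀ R r : ℝ, 0 < R → 0 < r → ∃ N : ℕ, ∀ (c : H) (s : Set H),
    s ⊆ Metric.closedBall c R → (∀ x ∈ s, ∀ y ∈ s, x ≠ y → r ≤ dist x y) →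
    s.Finite ∧ s.ncard ≤ N

/-- A finite product of metric spaces with property `(H)`, equipped with the `ℓ¹`
combination of the distances (the `PiLp 1` metric), satisfies property `(H)`. -/

theorem propertyH_of_l1_product' {n : ℕ} (X : Fin n → Type*)
    [∀ i, MetricSpace (X i)]
    (h : ∀ i, ∀ δ : ℝ, 0 ≤ δ → ∃ P : Polynomial ℝ, ∀ r : ℝ, 0 ≤ r → ∀ x y : X i,
      {t : X i | dist x t ≤ r ∧ dist x t + dist t y ≤ dist x y + δ}.Finite ∧
      ({t : X i | dist x t ≤ r ∧ dist x t + dist t y ≤ dist x y + δ}).ncard ≤ P.eval r) :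
    ∀ δ : ℝ, 0 ≤ δ → ∃ P : Polynomial ℝ, ∀ r : ℝ, 0 ≤ r → ∀ x y : PiLp 1 X,
      {t : PiLp 1 X | dist x t ≤ r ∧ dist x t + dist t y ≤ dist x y + δ}.Finite ∧
      ({t : PiLp 1 X | dist x t ≤ r ∧ dist x t + dist t y ≤ dist x y + δ}).ncard ≤ P.eval r := by
  intro δ hδ
  choose P hP using fun i => h i δ hδ
  refine ⟨∏ i, P i, fun r hr x y => ?_⟩
  have hdist : ∀ a b : PiLp 1 X, dist a b = ∑ i, dist (a i) (b i) := by
    intro a b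
    rw [PiLp.dist_eq_sum (p := 1) (by simp)]
    simp
  set Si : ∀ i, Set (X i) := fun i =>
    {t : X i | dist (x i) t ≤ r ∧ dist (x i) t + dist t (y i) ≤ dist (x i) (y i) + δ} with hSi
  have hsub : {t : PiLp 1 X | dist x t ≤ r ∧ dist x t + dist t y ≤ dist x y + δ}
      ⊆ WithLp.ofLp ⁻¹' Set.pi Set.univ Si := by
    intro t ht i _
    obtain ⟨h1, h2⟩ := ht
    rw [hdist] at h1 h2
    rw [hdist, hdist] at h2
    constructor
    · calc dist (x i) (t i) ≤ ∑ j, dist (x j) (t j) :=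
            Finset.single_le_sum (fun j _ => dist_nonneg) (Finset.mem_univ i)
        _ ≤ r := h1
    · have hf : ∀ j ∈ Finset.univ, (0:ℝ) ≤ dist (x j) (t j) + dist (t j) (y j) - dist (x j) (y j) :=
        fun j _ => by linarith [dist_triangle (x j) (t j) (y j)]
      have hsum : ∑ j, (dist (x j) (t j) + dist (t j) (y j) - dist (x j) (y j)) ≤ δ := by
        rw [Finset.sum_sub_distrib, Finset.sum_add_distrib] at *
        linarith
      have := Finset.single_le_sum hf (Finset.mem_univ i)
      linarith
  have hfin_i : ∀ i, (Si i).Finite := fun i => (hP i r hr (x i) (y i)).1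
  have hfinpi : (WithLp.ofLp ⁻¹' Set.pi Set.univ Si).Finite :=
    (Set.Finite.pi hfin_i).preimage (WithLp.ofLp_bijective 1 (V := ∀ i, X i)).1.injOn
  have hfin := hfinpi.subset hsub
  refine ⟨hfin, ?_⟩
  have hcard1 : ({t : PiLp 1 X | dist x t ≤ r ∧ dist x t + dist t y ≤ dist x y + δ}).ncard
      ≤ (WithLp.ofLp ⁻¹' Set.pi Set.univ Si).ncard := Set.ncard_le_ncard hsub hfinpi
  have hcardpi : (WithLp.ofLp (p := 1) ⁻¹' Set.pi Set.univ Si).ncard = ∏ i, (Si i).ncard := by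
    rw [Set.ncard_preimage_of_injective_subset_range (WithLp.ofLp_bijective 1 (V := ∀ i, X i)).1
      (by rw [(WithLp.ofLp_bijective 1 (V := ∀ i, X i)).2.range_eq]; exact Set.subset_univ _)]
    rw [← Nat.card_coe_set_eq, Nat.card_congr (Equiv.Set.univPi Si), Nat.card_pi]
    exact Finset.prod_congr rfl fun i _ => Nat.card_coe_set_eq (Si i)
  calc (({t : PiLp 1 X | dist x t ≤ r ∧ dist x t + dist t y ≤ dist x y + δ}).ncard : ℝ)
      ≤ ((∏ i, (Si i).ncard : ℕ) : ℝ) := by exact_mod_cast hcard1.trans_eq hcardpi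
    _ = ∏ i, ((Si i).ncard : ℝ) := by push_cast; ring
    _ ≤ ∏ i, (P i).eval r :=
        Finset.prod_le_prod (fun i _ => Nat.cast_nonneg _)
          (fun i _ => (hP i r hr (x i) (y i)).2)
    _ = (∏ i, P i).eval r := (Polynomial.eval_prod _ _ _).symm

theorem propertyH_of_l1_product {n : ℕ} (X : Fin n → Type*)
    [∀ i, MetricSpace (X i)] (h : ∀ i, HasPropertyH (X i)) :
    HasPropertyH (PiLp 1 X) :=
  propertyH_of_l1_product' X h
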